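/- Consider the planar ODE system α' = C/r^{n−1} − n sin(α)/r, r' = cos(α), with n ≥ 3 an integer and C a real constant. Then the function E(α, r) = 2rⁿ sin(α) − C r² is a first integral: along any solution (α(s), r(s)) with r(s) > 0, d/ds E(α(s), r(s)) = 0. -/

import Mathlib

open Real

/-- `E(α,r) = 2rⁿ sin α − Cr²` is a first integral of the system
`α' = C/r^{n−1} − n sin α / r`, `r' = cos α`. -/
theorem stmt_9 (n : ℕ) (hn : 3 ≤ n) (C : ℝ) (α r : ℝ → ℝ)
    (hrpos : ∀ s, 0 < r s)
    (hα : ∀ s, HasDerivAt α (C / (r s) ^ (n - 1) - n * Real.sin (α s) / r s) s)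
    (hr : ∀ s, HasDerivAt r (Real.cos (α s)) s) :
    ∀ s, HasDerivAt (fun t => 2 * (r t) ^ n * Real.sin (α t) - C * (r t) ^ 2) 0 s := by
  intro s
  have hrne : r s ≠ 0 := (hrpos s).ne'
  have hrn : HasDerivAt (fun t => (r t) ^ n) (n * (r s) ^ (n - 1) * Real.cos (α s)) s :=
    (hr s).pow n
  have hsin : HasDerivAt (fun t => Real.sin (α t))
      (Real.cos (α s) * (C / (r s) ^ (n - 1) - n * Real.sin (α s) / r s)) s :=
    (Real.hasDerivAt_sin (α s)).comp s (hα s)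
  have hr2 : HasDerivAt (fun t => (r t) ^ 2) (2 * (r s) ^ (2 - 1) * Real.cos (α s)) s :=
    (hr s).pow 2
  have h := (((hrn.const_mul (2:ℝ)).mul hsin).sub (hr2.const_mul C))
  convert h using 1
  · rfl
  · rfl
  · rfl
  have hpow : (r s) ^ n = (r s) ^ (n - 1) * r s := by
    rw [← pow_succ]
    congr 1
    omega
  have hne : (r s) ^ (n - 1) ≠ 0 := pow_ne_zero _ hrne
  field_simp
  rw [hpow]
  ring
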